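/- Let G be a Class 2 graph with critical edge e₁ = xy₁, φ a proper Δ-edge-coloring of G − e₁, and F = (x, e₁, y₁, …, e_p, y_p) a multi-fan at x. If α ∈ φ̄(x) and β ∈ φ̄(y_i) for some 1 ≤ i ≤ p, then x and y_i are (α,β)-linked, i.e., the (α,β)-chain containing x is a path with endvertices x and y_i. -/

import Mathlib

open SimpleGraph

/-- A proper `k`-edge-coloring of `G` with colors in `{1,…,k}`: every edge receives a color
in `{1,…,k}` and distinct edges sharing a vertex receive distinct colors. -/
def IsProperEdgeColoring {V : Type*} (G : SimpleGraph V) (k : ℕ) (c : Sym2 V → ℕ) : Prop :=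
  (∀ e ∈ G.edgeSet, c e ∈ Finset.Icc 1 k) ∧
  ∀ e ∈ G.edgeSet, ∀ f ∈ G.edgeSet, e ≠ f → (∃ v, v ∈ e ∧ v ∈ f) → c e ≠ c f

/-- `G` admits a proper `k`-edge-coloring. -/
def EdgeColorable {V : Type*} (G : SimpleGraph V) (k : ℕ) : Prop :=
  ∃ c, IsProperEdgeColoring G k c

/-- The chromatic index of `G`: the least `k` such that `G` is `k`-edge-colorable. -/
noncomputable def chromIndex {V : Type*} (G : SimpleGraph V) : ℕ :=
  sInf {k | EdgeColorable G k}


/-- The set of colors of `{1,…,k}` missing at `v` under the coloring `c`, i.e. not assigned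
to any edge of `G` incident with `v`. -/
def missing {V : Type*} (G : SimpleGraph V) (k : ℕ) (c : Sym2 V → ℕ) (v : V) : Set ℕ :=
  {α | α ∈ Finset.Icc 1 k ∧ ¬ ∃ u, G.Adj v u ∧ c s(v, u) = α}


/-- The spanning subgraph of `G` whose edges are those colored `α` or `β` by `c`;
its connected components are the `(α,β)`-chains. -/
def chainGraph {V : Type*} (G : SimpleGraph V) (c : Sym2 V → ℕ) (α β : ℕ) :
    SimpleGraph V where
  Adj u v := G.Adj u v ∧ (c s(u, v) = α ∨ c s(u, v) = β)
  symm := by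
    constructor
    intro u v h
    refine ⟨h.1.symm, ?_⟩
    rw [Sym2.eq_swap]
    exact h.2
  loopless := ⟨fun v h => G.loopless.1 v h.1⟩


/-- `u` and `v` are `(α,β)`-linked: the `(α,β)`-chain containing `u` is a path with
endvertices `u` and `v` (equivalently, since chains have maximum degree two: `u` and `v` are
distinct, lie on a common chain, and each has degree at most one in the chain subgraph). -/
def Linked {V : Type*} (G : SimpleGraph V) (c : Sym2 V → ℕ) (α β : ℕ) (u v : V) : Prop :=
  u ≠ v ∧ (chainGraph G c α β).Reachable u v ∧
    {w | (chainGraph G c α β).Adj u w}.ncard ≤ 1 ∧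
    {w | (chainGraph G c α β).Adj v w}.ncard ≤ 1

section Aux

variable {V : Type*}

private lemma mem_missing_iff {G : SimpleGraph V} {k : ℕ} {c : Sym2 V → ℕ} {v : V} {γ : ℕ} :
    γ ∈ missing G k c v ↔ γ ∈ Finset.Icc 1 k ∧ ¬ ∃ u, G.Adj v u ∧ c s(v, u) = γ :=
  Iff.rfl

private lemma cg_adj {G : SimpleGraph V} {c : Sym2 V → ℕ} {α β : ℕ} {u v : V} :
    (chainGraph G c α β).Adj u v ↔ G.Adj u v ∧ (c s(u, v) = α ∨ c s(u, v) = β) :=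
  Iff.rfl

private lemma sym2_exists_of_mem {K : SimpleGraph V} {e : Sym2 V} {v : V}
    (he : e ∈ K.edgeSet) (hv : v ∈ e) : ∃ u, K.Adj v u ∧ e = s(v, u) := by
  induction e using Sym2.ind with
  | _ a b =>
    rw [SimpleGraph.mem_edgeSet] at he
    rcases Sym2.mem_iff.1 hv with rfl | rfl
    · exact ⟨b, he, rfl⟩
    · exact ⟨a, he.symm, Sym2.eq_swap⟩

/-- Updating the color of one edge `s(a,b)` to a color `γ` not appearing at `a` nor at `b`
yields a proper coloring. -/
private lemma proper_update [DecidableEq (Sym2 V)] (K : SimpleGraph V) (k : ℕ)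
    (d : Sym2 V → ℕ) (a b : V) (hab : K.Adj a b) (γ : ℕ) (hγ : γ ∈ Finset.Icc 1 k)
    (hK1 : ∀ e ∈ K.edgeSet, e ≠ s(a, b) → d e ∈ Finset.Icc 1 k)
    (hK2 : ∀ e ∈ K.edgeSet, e ≠ s(a, b) → ∀ f ∈ K.edgeSet, f ≠ s(a, b) → e ≠ f →
      (∃ v, v ∈ e ∧ v ∈ f) → d e ≠ d f)
    (hma : ∀ u, K.Adj a u → s(a, u) ≠ s(a, b) → d s(a, u) ≠ γ)
    (hmb : ∀ u, K.Adj b u → s(b, u) ≠ s(a, b) → d s(b, u) ≠ γ) :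
    IsProperEdgeColoring K k (Function.update d s(a, b) γ) := by
  have key : ∀ f ∈ K.edgeSet, f ≠ s(a, b) → (∃ v, v ∈ s(a, b) ∧ v ∈ f) → d f ≠ γ := by
    rintro f hf hfne ⟨v, hv1, hv2⟩
    obtain ⟨u, huadj, rfl⟩ := sym2_exists_of_mem hf hv2
    rcases Sym2.mem_iff.1 hv1 with rfl | rfl
    · exact hma u huadj hfne
    · exact hmb u huadj hfne
  constructor
  · intro e he
    by_cases h : e = s(a, b)
    · rw [h, Function.update_self]; exact hγ
    · rw [Function.update_of_ne h]; exact hK1 e he h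
  · intro e he f hf hef hshare
    by_cases h1 : e = s(a, b) <;> by_cases h2 : f = s(a, b)
    · exact absurd (h1.trans h2.symm) hef
    · subst h1
      rw [Function.update_self, Function.update_of_ne h2]
      exact (key f hf h2 hshare).symm
    · subst h2
      rw [Function.update_self, Function.update_of_ne h1]
      exact key e he h1 (by obtain ⟨v, hv1, hv2⟩ := hshare; exact ⟨v, hv2, hv1⟩)
    · rw [Function.update_of_ne h1, Function.update_of_ne h2]
      exact hK2 e he h1 f hf h2 hef hshare

/-- The contradiction engine (fan shifting): if a proper Δ-coloring of `G - e₁` satisfies the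
multi-fan condition up to index `i` and some color is missing at both `x` and `y i`, then one
can shift colors down the fan and color `e₁`, producing a proper Δ-coloring of `G`:
contradiction with `G` being Class 2. -/
private lemma fan_shift [Fintype V] (G : SimpleGraph V) [DecidableRel G.Adj]
    (hclass2 : chromIndex G = G.maxDegree + 1) (x : V) (p : ℕ) (y : Fin (p + 1) → V)
    (hadj : ∀ i, G.Adj x (y i)) (hinj : Function.Injective y) :
    ∀ n : ℕ, ∀ i : Fin (p + 1), (i : ℕ) = n →
    ∀ d : Sym2 V → ℕ,
      IsProperEdgeColoring (G.deleteEdges {s(x, y 0)}) G.maxDegree d →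
      (∀ k : Fin (p + 1), (k : ℕ) ≤ n → 0 < (k : ℕ) →
        ∃ j : Fin (p + 1), (j : ℕ) < (k : ℕ) ∧
          d s(x, y k) ∈ missing (G.deleteEdges {s(x, y 0)}) G.maxDegree d (y j)) →
    ∀ γ : ℕ, γ ∈ missing (G.deleteEdges {s(x, y 0)}) G.maxDegree d x →
      γ ∈ missing (G.deleteEdges {s(x, y 0)}) G.maxDegree d (y i) → False := by
  classical
  set H := G.deleteEdges {s(x, y 0)} with hH
  have hGH : ∀ {a b : V}, G.Adj a b → s(a, b) ≠ s(x, y 0) → H.Adj a b := by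
    intro a b h hne
    rw [hH, SimpleGraph.deleteEdges_adj]
    exact ⟨h, by simpa using hne⟩
  have hGHe : ∀ e ∈ G.edgeSet, e ≠ s(x, y 0) → e ∈ H.edgeSet := by
    intro e he hne
    induction e using Sym2.ind with
    | _ a b => exact (SimpleGraph.mem_edgeSet _).2 (hGH ((SimpleGraph.mem_edgeSet _).1 he) hne)
  have hHadj : ∀ k : Fin (p + 1), 0 < (k : ℕ) → H.Adj x (y k) := by
    intro k hk
    refine hGH (hadj k) ?_
    intro h
    have h0 : k = 0 := hinj (Sym2.congr_right.1 h)
    rw [h0] at hk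
    simp at hk
  intro n
  induction n using Nat.strong_induction_on with
  | _ n IH =>
    intro i hi d hd hfand γ hγx hγi
    obtain ⟨hγIcc, hγx2⟩ := mem_missing_iff.1 hγx
    obtain ⟨-, hγi2⟩ := mem_missing_iff.1 hγi
    by_cases hn0 : n = 0
    · -- base case: color the uncolored edge s(x, y 0) with γ
      subst hn0
      have hi0 : i = 0 := Fin.ext (by simpa using hi)
      subst hi0
      have hprop : IsProperEdgeColoring G G.maxDegree (Function.update d s(x, y 0) γ) := by
        refine proper_update G G.maxDegree d x (y 0) (hadj 0) γ hγIcc ?_ ?_ ?_ ?_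
        · intro e he hne; exact hd.1 e (hGHe e he hne)
        · intro e he hne f hf hfne hef hsh
          exact hd.2 e (hGHe e he hne) f (hGHe f hf hfne) hef hsh
        · intro u hu hne hcol; exact hγx2 ⟨u, hGH hu hne, hcol⟩
        · intro u hu hne hcol; exact hγi2 ⟨u, hGH hu hne, hcol⟩
      have hle : chromIndex G ≤ G.maxDegree := Nat.sInf_le ⟨_, hprop⟩
      omega
    · -- inductive step: recolor e_i with γ and shift down
      have hipos : 0 < (i : ℕ) := by omega
      obtain ⟨j, hjlt, hjmem⟩ := hfand i (le_of_eq hi) hipos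
      obtain ⟨hjIcc, hjm2⟩ := mem_missing_iff.1 hjmem
      have heH : H.Adj x (y i) := hHadj i hipos
      have hyj_ne_x : y j ≠ x := (hadj j).ne'
      have hyji : y j ≠ y i := by
        intro h
        have := hinj h
        rw [this] at hjlt
        omega
      have hprop' : IsProperEdgeColoring H G.maxDegree (Function.update d s(x, y i) γ) := by
        refine proper_update H G.maxDegree d x (y i) heH γ hγIcc ?_ ?_ ?_ ?_
        · intro e he _; exact hd.1 e he
        · intro e he _ f hf _ hef hsh; exact hd.2 e he f hf hef hsh
        · intro u hu _ hcol; exact hγx2 ⟨u, hu, hcol⟩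
        · intro u hu _ hcol; exact hγi2 ⟨u, hu, hcol⟩
      -- δ := d s(x, y i) is now missing at x
      have hδx : d s(x, y i) ∈ missing H G.maxDegree (Function.update d s(x, y i) γ) x := by
        refine mem_missing_iff.2 ⟨hd.1 _ ((SimpleGraph.mem_edgeSet _).2 heH), ?_⟩
        rintro ⟨u, hu, hcol⟩
        by_cases h : s(x, u) = s(x, y i)
        · rw [h, Function.update_self] at hcol
          exact hγx2 ⟨y i, heH, hcol.symm⟩
        · rw [Function.update_of_ne h] at hcol
          exact hd.2 _ ((SimpleGraph.mem_edgeSet _).2 hu) _ ((SimpleGraph.mem_edgeSet _).2 heH) h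
            ⟨x, Sym2.mem_mk_left x u, Sym2.mem_mk_left x (y i)⟩ hcol
      -- δ is still missing at y j
      have hδj : d s(x, y i) ∈ missing H G.maxDegree (Function.update d s(x, y i) γ) (y j) := by
        refine mem_missing_iff.2 ⟨hjIcc, ?_⟩
        rintro ⟨u, hu, hcol⟩
        by_cases h : s(y j, u) = s(x, y i)
        · have hmem : y j ∈ s(x, y i) := h ▸ Sym2.mem_mk_left (y j) u
          rcases Sym2.mem_iff.1 hmem with h1 | h1
          · exact hyj_ne_x h1
          · exact hyji h1
        · rw [Function.update_of_ne h] at hcol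
          exact hjm2 ⟨u, hu, hcol⟩
      -- fan condition still holds up to j for the updated coloring
      have hfand' : ∀ k : Fin (p + 1), (k : ℕ) ≤ (j : ℕ) → 0 < (k : ℕ) →
          ∃ j' : Fin (p + 1), (j' : ℕ) < (k : ℕ) ∧
            (Function.update d s(x, y i) γ) s(x, y k) ∈
              missing H G.maxDegree (Function.update d s(x, y i) γ) (y j') := by
        intro k hk hk0
        obtain ⟨j', hj'lt, hj'mem⟩ := hfand k (by omega) hk0
        obtain ⟨hj'Icc, hj'm2⟩ := mem_missing_iff.1 hj'mem
        have hkne : s(x, y k) ≠ s(x, y i) := by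
          intro h
          have := hinj (Sym2.congr_right.1 h)
          rw [this] at hk
          omega
        refine ⟨j', hj'lt, ?_⟩
        rw [Function.update_of_ne hkne]
        refine mem_missing_iff.2 ⟨hj'Icc, ?_⟩
        rintro ⟨u, hu, hcol⟩
        by_cases h : s(y j', u) = s(x, y i)
        · have hmem : y j' ∈ s(x, y i) := h ▸ Sym2.mem_mk_left (y j') u
          rcases Sym2.mem_iff.1 hmem with h1 | h1
          · exact (hadj j').ne' h1
          · have := hinj h1
            rw [this] at hj'lt
            omega
        · rw [Function.update_of_ne h] at hcol
          exact hj'm2 ⟨u, hu, hcol⟩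
      exact IH (j : ℕ) (by omega) j rfl (Function.update d s(x, y i) γ) hprop' hfand'
        (d s(x, y i)) hδx hδj

end Aux

/-- with `G` Class 2, `e₁ = x(y 0)` critical, `c` a proper `Δ`-edge-coloring
of `G − e₁` and a multi-fan at `x`: if `α` is missing at `x` and `β` is missing at `y i`,
then `x` and `y i` are `(α,β)`-linked. -/
theorem stmt_7 {V : Type*} [Fintype V] (G : SimpleGraph V) [DecidableRel G.Adj]
    (hclass2 : chromIndex G = G.maxDegree + 1) (x : V) (p : ℕ) (y : Fin (p + 1) → V)
    (hadj : ∀ i, G.Adj x (y i)) (hinj : Function.Injective y)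
    (hcrit : chromIndex (G.deleteEdges {s(x, y 0)}) < chromIndex G)
    (c : Sym2 V → ℕ)
    (hc : IsProperEdgeColoring (G.deleteEdges {s(x, y 0)}) G.maxDegree c)
    (hfan : ∀ i : Fin (p + 1), 0 < (i : ℕ) → ∃ j : Fin (p + 1), (j : ℕ) < (i : ℕ) ∧
      c s(x, y i) ∈ missing (G.deleteEdges {s(x, y 0)}) G.maxDegree c (y j))
    (i : Fin (p + 1)) (α β : ℕ)
    (hα : α ∈ missing (G.deleteEdges {s(x, y 0)}) G.maxDegree c x)
    (hβ : β ∈ missing (G.deleteEdges {s(x, y 0)}) G.maxDegree c (y i)) :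
    Linked (G.deleteEdges {s(x, y 0)}) c α β x (y i) := by
  classical
  set H := G.deleteEdges {s(x, y 0)} with hH
  obtain ⟨hαIcc, hαx⟩ := mem_missing_iff.1 hα
  obtain ⟨hβIcc, hβ2⟩ := mem_missing_iff.1 hβ
  have hGH : ∀ {a b : V}, G.Adj a b → s(a, b) ≠ s(x, y 0) → H.Adj a b := by
    intro a b h hne
    rw [hH, SimpleGraph.deleteEdges_adj]
    exact ⟨h, by simpa using hne⟩
  have hHadj : ∀ k : Fin (p + 1), 0 < (k : ℕ) → H.Adj x (y k) := by
    intro k hk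
    refine hGH (hadj k) ?_
    intro h
    have h0 : k = 0 := hinj (Sym2.congr_right.1 h)
    rw [h0] at hk
    simp at hk
  -- if α = β, the hypotheses are contradictory by fan shifting
  by_cases hαβ : α = β
  · exact (fan_shift G hclass2 x p y hadj hinj (i : ℕ) i rfl c hc
      (fun k _ hk0 => hfan k hk0) α hα (by rw [hαβ]; exact hβ)).elim
  set cg := chainGraph H c α β with hcg
  -- degree bound in the chain graph at a vertex missing α or β
  have degbound : ∀ v : V,
      (¬ ∃ u, H.Adj v u ∧ c s(v, u) = α) ∨ (¬ ∃ u, H.Adj v u ∧ c s(v, u) = β) →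
      ({w | cg.Adj v w}).ncard ≤ 1 := by
    intro v hv
    rw [Set.ncard_le_one_iff (Set.toFinite _)]
    intro a b ha hb
    obtain ⟨ha1, ha2⟩ := cg_adj.1 ha
    obtain ⟨hb1, hb2⟩ := cg_adj.1 hb
    by_contra hab
    have hedge_ne : s(v, a) ≠ s(v, b) := fun h => hab (Sym2.congr_right.1 h)
    have hne := hc.2 s(v, a) ((SimpleGraph.mem_edgeSet _).2 ha1) s(v, b)
      ((SimpleGraph.mem_edgeSet _).2 hb1) hedge_ne
      ⟨v, Sym2.mem_mk_left v a, Sym2.mem_mk_left v b⟩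
    rcases hv with hv | hv
    · have ha3 : c s(v, a) = β := ha2.resolve_left fun h => hv ⟨a, ha1, h⟩
      have hb3 : c s(v, b) = β := hb2.resolve_left fun h => hv ⟨b, hb1, h⟩
      exact hne (ha3.trans hb3.symm)
    · have ha3 : c s(v, a) = α := ha2.resolve_right fun h => hv ⟨a, ha1, h⟩
      have hb3 : c s(v, b) = α := hb2.resolve_right fun h => hv ⟨b, hb1, h⟩
      exact hne (ha3.trans hb3.symm)
  refine ⟨(hadj i).ne, ?_, degbound x (Or.inl hαx), degbound (y i) (Or.inr hβ2)⟩
  -- reachability by strong induction on the fan index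
  suffices key : ∀ n : ℕ, ∀ i' : Fin (p + 1), (i' : ℕ) = n →
      β ∈ missing H G.maxDegree c (y i') → cg.Reachable x (y i') by
    exact key (i : ℕ) i rfl hβ
  intro n
  induction n using Nat.strong_induction_on with
  | _ n IH =>
    intro i' hi' hβ'
    obtain ⟨-, hβ'2⟩ := mem_missing_iff.1 hβ'
    by_contra hreach
    have hnrx : ¬ cg.Reachable (y i') x := fun h => hreach h.symm
    -- Kempe chain swap on the component of y i'
    set P : Sym2 V → Prop := fun e => ∃ u v, e = s(u, v) ∧ cg.Adj u v ∧ cg.Reachable (y i') u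
      with hPdef
    set sw : ℕ → ℕ := fun γ => if γ = α then β else if γ = β then α else γ with hswdef
    set c' : Sym2 V → ℕ := fun e => if P e then sw (c e) else c e with hc'def
    have hsw_inj : Function.Injective sw := by
      intro a b hab
      simp only [hswdef] at hab
      split_ifs at hab <;> omega
    have hswα : sw α = β := by simp [hswdef]
    have hswβ : sw β = α := by simp only [hswdef]; rw [if_neg (Ne.symm hαβ), if_pos trivial]
    have hPmem : ∀ {e}, P e → ∀ v ∈ e, cg.Reachable (y i') v := by
      rintro e ⟨u, v, rfl, huv, hru⟩ w hw
      rcases Sym2.mem_iff.1 hw with rfl | rfl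
      · exact hru
      · exact hru.trans huv.reachable
    have hPof : ∀ {a b : V}, cg.Adj a b → cg.Reachable (y i') a → P s(a, b) :=
      fun h hr => ⟨_, _, rfl, h, hr⟩
    have hPcol : ∀ {e}, P e → c e = α ∨ c e = β := by
      rintro e ⟨u, v, rfl, huv, -⟩
      exact (cg_adj.1 huv).2
    have hc'P : ∀ {e}, P e → c' e = sw (c e) := by
      intro e h; simp only [hc'def, if_pos h]
    have hc'nP : ∀ {e}, ¬ P e → c' e = c e := by
      intro e h; simp only [hc'def, if_neg h]
    -- the swapped coloring is proper
    have hc' : IsProperEdgeColoring H G.maxDegree c' := by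
      constructor
      · intro e he
        by_cases h : P e
        · rw [hc'P h]
          rcases hPcol h with h1 | h1
          · rw [h1, hswα]; exact hβIcc
          · rw [h1, hswβ]; exact hαIcc
        · rw [hc'nP h]; exact hc.1 e he
      · have main : ∀ e ∈ H.edgeSet, ∀ f ∈ H.edgeSet, (∃ v, v ∈ e ∧ v ∈ f) →
            P e → ¬ P f → c' e ≠ c' f := by
          rintro e he f hf ⟨v, hve, hvf⟩ hPe hPf heq
          rw [hc'P hPe, hc'nP hPf] at heq
          have hcf : c f = α ∨ c f = β := by
            rcases hPcol hPe with h1 | h1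
            · rw [h1, hswα] at heq; exact Or.inr heq.symm
            · rw [h1, hswβ] at heq; exact Or.inl heq.symm
          obtain ⟨a, haadj, rfl⟩ := sym2_exists_of_mem hf hvf
          exact hPf (hPof (cg_adj.2 ⟨haadj, hcf⟩) (hPmem hPe v hve))
        intro e he f hf hef hsh
        by_cases h1 : P e <;> by_cases h2 : P f
        · rw [hc'P h1, hc'P h2]
          exact fun h => hc.2 e he f hf hef hsh (hsw_inj h)
        · exact main e he f hf hsh h1 h2
        · intro h
          exact main f hf e he (by obtain ⟨v, hv1, hv2⟩ := hsh; exact ⟨v, hv2, hv1⟩)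
            h2 h1 h.symm
        · rw [hc'nP h1, hc'nP h2]; exact hc.2 e he f hf hef hsh
    -- missing colors preserved away from the swapped component
    have hmiss_far : ∀ v : V, ¬ cg.Reachable (y i') v → ∀ δ,
        δ ∈ missing H G.maxDegree c v → δ ∈ missing H G.maxDegree c' v := by
      intro v hv δ hδ
      obtain ⟨hδ1, hδ2⟩ := mem_missing_iff.1 hδ
      refine mem_missing_iff.2 ⟨hδ1, ?_⟩
      rintro ⟨u, hu, hcol⟩
      by_cases h : P s(v, u)
      · exact hv (hPmem h v (Sym2.mem_mk_left v u))
      · rw [hc'nP h] at hcol; exact hδ2 ⟨u, hu, hcol⟩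
    -- missing colors other than α, β always preserved
    have hmiss_other : ∀ v δ, δ ≠ α → δ ≠ β →
        δ ∈ missing H G.maxDegree c v → δ ∈ missing H G.maxDegree c' v := by
      intro v δ hδα hδβ hδ
      obtain ⟨hδ1, hδ2⟩ := mem_missing_iff.1 hδ
      refine mem_missing_iff.2 ⟨hδ1, ?_⟩
      rintro ⟨u, hu, hcol⟩
      by_cases h : P s(v, u)
      · rw [hc'P h] at hcol
        rcases hPcol h with h1 | h1
        · rw [h1, hswα] at hcol; exact hδβ hcol.symm
        · rw [h1, hswβ] at hcol; exact hδα hcol.symm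
      · rw [hc'nP h] at hcol; exact hδ2 ⟨u, hu, hcol⟩
    -- α is missing at x for c'
    have hαx' : α ∈ missing H G.maxDegree c' x := hmiss_far x hnrx α hα
    -- α is missing at y i' for c'
    have hαyi' : α ∈ missing H G.maxDegree c' (y i') := by
      refine mem_missing_iff.2 ⟨hαIcc, ?_⟩
      rintro ⟨u, hu, hcol⟩
      by_cases h : P s(y i', u)
      · rw [hc'P h] at hcol
        rcases hPcol h with h1 | h1
        · rw [h1, hswα] at hcol; exact (Ne.symm hαβ) hcol
        · exact hβ'2 ⟨u, hu, h1⟩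
      · rw [hc'nP h] at hcol
        exact h (hPof (cg_adj.2 ⟨hu, Or.inl hcol⟩) (SimpleGraph.Reachable.refl _))
    -- fan edges keep their colors
    have hfanedge : ∀ k : Fin (p + 1), c' s(x, y k) = c s(x, y k) := by
      intro k
      apply hc'nP
      intro h
      exact hnrx (hPmem h x (Sym2.mem_mk_left x (y k)))
    -- fan condition holds for c' up to n
    have hfanc' : ∀ k : Fin (p + 1), (k : ℕ) ≤ n → 0 < (k : ℕ) →
        ∃ j : Fin (p + 1), (j : ℕ) < (k : ℕ) ∧
          c' s(x, y k) ∈ missing H G.maxDegree c' (y j) := by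
      intro k hk hk0
      obtain ⟨j, hjk, hjm⟩ := hfan k hk0
      refine ⟨j, hjk, ?_⟩
      rw [hfanedge k]
      by_cases hγα : c s(x, y k) = α
      · exact absurd ⟨y k, hHadj k hk0, hγα⟩ hαx
      by_cases hγβ : c s(x, y k) = β
      · have hjn : (j : ℕ) < n := lt_of_lt_of_le hjk hk
        have hrj : cg.Reachable x (y j) := IH (j : ℕ) hjn j rfl (hγβ ▸ hjm)
        have hnrj : ¬ cg.Reachable (y i') (y j) := fun h => hnrx (h.trans hrj.symm)
        exact hmiss_far (y j) hnrj _ hjm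
      · exact hmiss_other (y j) _ hγα hγβ hjm
    -- contradiction: α missing at both x and y i' is impossible
    exact fan_shift G hclass2 x p y hadj hinj n i' hi' c' hc' hfanc' α hαx' hαyi'
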